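/- Let X = (V,E) be a digraph and for a positive integer m let N_X(m) denote the number of pairs (f, σ) where f : V → {1,…,m} and σ is an (f,X)-friendly V-listing. Then there exists a polynomial u_X with integer coefficients such that u_X(m) = N_X(m) for every positive integer m. -/

import Mathlib

/-- A listing `l = (σ_1, …, σ_n)` is `(f,X)`-friendly if
`f(σ_1) ≤ f(σ_2) ≤ ⋯ ≤ f(σ_n)` and `f(σ_j) < f(σ_{j+1})` for each `j ∈ [n-1]`
with `(σ_j, σ_{j+1})` an edge of `X`. -/
def Friendly {V : Type*} (E : V → V → Prop) (f : V → ℕ) (l : List V) : Prop :=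
  l.Chain' (fun u v => f u ≤ f v) ∧
  ∀ i : ℕ, ∀ (h1 : 1 ≤ i) (h2 : i ≤ l.length - 1),
    E (l.get ⟨i - 1, by omega⟩) (l.get ⟨i, by omega⟩) →
      f (l.get ⟨i - 1, by omega⟩) < f (l.get ⟨i, by omega⟩)

/-- `N_X(m)`: the number of pairs `(f, σ)` with `f : V → {1, …, m}` a coloring and `σ`
an `(f,X)`-friendly `V`-listing (the value of the Redei-Berge polynomial at `m`). -/
noncomputable def RBCount (V : Type*) [Fintype V] (E : V → V → Prop) (m : ℕ) : ℕ :=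
  Nat.card {p : (V → ℕ) × List V //
    (∀ x, 1 ≤ p.1 x ∧ p.1 x ≤ m) ∧ p.2.Nodup ∧ (∀ x, x ∈ p.2) ∧ Friendly E p.1 p.2}

namespace RBAux

/-- The combined relation on consecutive elements of a friendly listing. -/
def Rel {V : Type*} (E : V → V → Prop) (f : V → ℕ) (u v : V) : Prop :=
  f u ≤ f v ∧ (E u v → f u < f v)

lemma friendly_iff_chain' {V : Type*} {E : V → V → Prop} {f : V → ℕ} {l : List V} :
    Friendly E f l ↔ l.Chain' (Rel E f) := by
  constructor
  · rintro ⟨h1, h2⟩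
    rw [List.Chain', List.isChain_iff_getElem]
    intro i hi
    refine ⟨List.isChain_iff_getElem.mp h1 i hi, ?_⟩
    intro hEd
    exact h2 (i + 1) (by omega) (by omega) hEd
  · intro h
    refine ⟨h.imp (fun _ _ hab => hab.1), ?_⟩
    intro i h1 h2 hEd
    have hget := List.isChain_iff_getElem.mp h (i - 1) (by omega)
    have hfin : i - 1 + 1 = i := by omega
    simp only [hfin] at hget
    exact hget.2 hEd

end RBAux
namespace RBAux

universe u v

lemma chain'_of_mem_flatten {α : Type u} {R : α → α → Prop} :
    ∀ (L : List (List α)), L.flatten.Chain' R → ∀ l ∈ L, l.Chain' R := by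
  intro L
  induction L with
  | nil => intro _ l hl; simp at hl
  | cons a L ih =>
    intro h l hl
    rw [List.flatten_cons, List.Chain', List.isChain_append] at h
    rcases List.mem_cons.mp hl with rfl | hl
    · exact h.1
    · exact ih h.2.1 l hl

lemma chain'_imp_of_mem {α : Type u} {R S : α → α → Prop} :
    ∀ {l : List α}, (∀ a b, a ∈ l → b ∈ l → R a b → S a b) → l.Chain' R → l.Chain' S := by
  intro l
  induction l with
  | nil => intro _ _; exact List.IsChain.nil
  | cons a l ih =>
    intro H h
    cases l with
    | nil => exact List.isChain_singleton _
    | cons b t =>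
      rw [List.Chain', List.isChain_cons_cons] at h ⊢
      refine ⟨H a b (by simp) (by simp) h.1, ih ?_ h.2⟩
      intro x y hx hy
      exact H x y (List.mem_cons_of_mem _ hx) (List.mem_cons_of_mem _ hy)

lemma flatMap_congr' {α : Type u} {β : Type v} {L : List α} {g g' : α → List β}
    (h : ∀ a ∈ L, g a = g' a) : L.flatMap g = L.flatMap g' := by
  induction L with
  | nil => simp
  | cons a L ih =>
    simp only [List.flatMap_cons]
    rw [h a (by simp), ih (fun a ha => h a (List.mem_cons_of_mem _ ha))]

lemma flatMap_single {α : Type u} (g : ℕ → List α) :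
    ∀ (L : List ℕ), L.Nodup → ∀ v ∈ L, (∀ v' ∈ L, v' ≠ v → g v' = []) →
      L.flatMap g = g v := by
  intro L
  induction L with
  | nil => intro _ v hv; simp at hv
  | cons a L ih =>
    intro hnd v hv hz
    rw [List.flatMap_cons]
    rcases List.mem_cons.mp hv with rfl | hv
    · have : L.flatMap g = [] := by
        rw [List.flatMap_eq_nil_iff]
        intro x hx
        exact hz x (List.mem_cons_of_mem _ hx)
          (fun hxa => (List.nodup_cons.mp hnd).1 (hxa ▸ hx))
      rw [this, List.append_nil]
    · have ha : g a = [] := hz a (by simp)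
        (fun hav => (List.nodup_cons.mp hnd).1 (hav ▸ hv))
      rw [ha, List.nil_append]
      exact ih (List.nodup_cons.mp hnd).2 v hv
        (fun v' hv' => hz v' (List.mem_cons_of_mem _ hv'))

/-- The key sorting lemma: an `f`-monotone list is recovered by concatenating its
value-filters in increasing value order. -/
lemma flatMap_filter_eq {V : Type u} (f : V → ℕ) :
    ∀ (L : List ℕ), L.Pairwise (· < ·) →
    ∀ (l : List V), l.Pairwise (fun a b => f a ≤ f b) → (∀ x ∈ l, f x ∈ L) →
      (L.flatMap fun v => l.filter fun x => f x = v) = l := by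
  intro L
  induction L with
  | nil =>
    intro _ l _ hmem
    cases l with
    | nil => simp
    | cons a t => exact absurd (hmem a (by simp)) (by simp)
  | cons v L ih =>
    intro hL l hp hmem
    obtain ⟨hLhead, hLtail⟩ := List.pairwise_cons.mp hL
    have hsplit : (l.takeWhile fun x => decide (f x = v)) ++
        (l.dropWhile fun x => decide (f x = v)) = l :=
      List.takeWhile_append_dropWhile
    have h₁ : ∀ x ∈ l.takeWhile fun x => decide (f x = v), f x = v := by
      intro x hx; simpa using List.mem_takeWhile_imp hx
    have hp₂ : (l.dropWhile fun x => decide (f x = v)).Pairwise (fun a b => f a ≤ f b) :=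
      hp.sublist (List.dropWhile_sublist _)
    have hsub₂ : ∀ x ∈ l.dropWhile fun x => decide (f x = v), x ∈ l :=
      fun x hx => (List.dropWhile_sublist _).subset hx
    have h₂ : ∀ x ∈ l.dropWhile fun x => decide (f x = v), v < f x := by
      cases hc : l.dropWhile fun x => decide (f x = v) with
      | nil => simp
      | cons b t =>
        have hbv : ¬ f b = v := by
          have h := List.head?_dropWhile_not (fun x => decide (f x = v)) l
          rw [hc] at h
          simpa using h
        have hbl : b ∈ l := by
          apply hsub₂; rw [hc]; simp
        have hbL : v < f b := by
          rcases List.mem_cons.mp (hmem b hbl) with h | h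
          · exact absurd h hbv
          · exact hLhead _ h
        intro x hx
        rcases List.mem_cons.mp hx with rfl | hx
        · exact hbL
        · have hble : f b ≤ f x := by
            have h := hp₂
            rw [hc, List.pairwise_cons] at h
            exact h.1 x hx
          omega
    have hfil : (l.filter fun x => decide (f x = v)) =
        l.takeWhile fun x => decide (f x = v) := by
      conv_lhs => rw [← hsplit]
      rw [List.filter_append, List.filter_eq_self.mpr (fun a ha => by
          simp only [decide_eq_true_eq]; exact h₁ a ha),
        List.filter_eq_nil_iff.mpr (fun a ha => by
          simp only [decide_eq_true_eq]
          intro hh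
          have := h₂ a ha; omega),
        List.append_nil]
    have hrest : (L.flatMap fun w => l.filter fun x => decide (f x = w)) =
        L.flatMap fun w => (l.dropWhile fun x => decide (f x = v)).filter
          fun x => decide (f x = w) := by
      apply flatMap_congr'
      intro w hw
      conv_lhs => rw [← hsplit]
      rw [List.filter_append, List.filter_eq_nil_iff.mpr (fun a ha => by
        simp only [decide_eq_true_eq]
        intro hh
        have := h₁ a ha
        have := hLhead w hw
        omega), List.nil_append]
    have hih : (L.flatMap fun w => (l.dropWhile fun x => decide (f x = v)).filter
        fun x => decide (f x = w)) = l.dropWhile fun x => decide (f x = v) := by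
      apply ih hLtail _ hp₂
      intro x hx
      rcases List.mem_cons.mp (hmem x (hsub₂ x hx)) with h | h
      · exact absurd h (by have := h₂ x hx; omega)
      · exact h
    calc ((v :: L).flatMap fun w => l.filter fun x => decide (f x = w))
        = (l.filter fun x => decide (f x = v)) ++
            (L.flatMap fun w => l.filter fun x => decide (f x = w)) := by
          rw [List.flatMap_cons]
      _ = l := by rw [hfil, hrest, hih, hsplit]

section Blocks

variable {V : Type*} [Fintype V] [DecidableEq V] (E : V → V → Prop)

/-- Number of orderings of `S` with no edge between consecutive elements. -/
noncomputable def A (S : Finset V) : ℕ :=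
  Nat.card {l : List V // l.Nodup ∧ (∀ x, x ∈ l ↔ x ∈ S) ∧ l.Chain' (fun a b => ¬ E a b)}

def FriendlyT (f : V → ℕ) :=
  {σ : List V // σ.Nodup ∧ (∀ x, x ∈ σ) ∧ σ.Chain' (Rel E f)}

def BlockT (f : V → ℕ) (v : ℕ) :=
  {l : List V // l.Nodup ∧ (∀ x, x ∈ l ↔ f x = v) ∧ l.Chain' (fun a b => ¬ E a b)}

lemma finite_of_nodup (P : List V → Prop) (h : ∀ l, P l → l.Nodup) :
    Finite {l : List V // P l} := by
  have hs : {l : List V | P l} ⊆ {l : List V | l.length ≤ Fintype.card V} :=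
    fun l hl => (h l hl).length_le_card
  exact ((List.finite_length_le V (Fintype.card V)).subset hs).to_subtype

instance (f : V → ℕ) : Finite (FriendlyT E f) :=
  finite_of_nodup _ (fun _ h => h.1)

instance (f : V → ℕ) (v : ℕ) : Finite (BlockT E f v) :=
  finite_of_nodup _ (fun _ h => h.1)

variable {E}

/-- Auxiliary: the list associated to the value `w`. -/
def Tfun (f : V → ℕ) (t : ∀ v : {v // v ∈ Finset.univ.image f}, BlockT E f v.1) (w : ℕ) :
    List V :=
  if h : w ∈ Finset.univ.image f then (t ⟨w, h⟩).1 else []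

lemma mem_Tfun {f : V → ℕ} {t : ∀ v : {v // v ∈ Finset.univ.image f}, BlockT E f v.1}
    {w : ℕ} {x : V} (hx : x ∈ Tfun f t w) : f x = w := by
  by_cases h : w ∈ Finset.univ.image f
  · rw [Tfun, dif_pos h] at hx
    exact ((t ⟨w, h⟩).2.2.1 x).mp hx
  · rw [Tfun, dif_neg h] at hx
    simp at hx

noncomputable def friendlyEquiv (f : V → ℕ) :
    FriendlyT E f ≃ (∀ v : {v // v ∈ Finset.univ.image f}, BlockT E f v.1) where
  toFun σ v := by
    refine ⟨σ.1.filter (fun x => f x = v.1), σ.2.1.filter _, ?_, ?_⟩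
    · intro x
      simp [List.mem_filter, σ.2.2.1 x]
    · -- Chain' (¬E) on the filtered list
      haveI : IsTrans V (fun a b => f a ≤ f b) := ⟨fun _ _ _ h h' => le_trans h h'⟩
      have hσpair : σ.1.Pairwise (fun a b => f a ≤ f b) :=
        List.isChain_iff_pairwise.mp (σ.2.2.2.imp (fun _ _ h => h.1))
      have hJ : (((Finset.univ.image f).sort (· ≤ ·)).flatMap
          fun w => σ.1.filter fun x => f x = w) = σ.1 :=
        flatMap_filter_eq f _ (List.sortedLT_iff_pairwise.mp (Finset.sortedLT_sort _)) σ.1 hσpair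
          (fun x _ => (Finset.mem_sort _).mpr (Finset.mem_image.mpr ⟨x, Finset.mem_univ x, rfl⟩))
      have hcomp : (σ.1.filter fun x => f x = v.1).Chain' (Rel E f) := by
        refine chain'_of_mem_flatten
          ((((Finset.univ.image f).sort (· ≤ ·))).map fun w => σ.1.filter fun x => f x = w)
          ?_ _ (List.mem_map.mpr ⟨v.1, (Finset.mem_sort _).mpr v.2, rfl⟩)
        rw [← List.flatMap_def, hJ]
        exact σ.2.2.2
      refine chain'_imp_of_mem (fun a b ha hb hR => ?_) hcomp
      have hfa : f a = v.1 := by simpa using (List.mem_filter.mp ha).2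
      have hfb : f b = v.1 := by simpa using (List.mem_filter.mp hb).2
      intro hEab
      have := hR.2 hEab
      omega
  invFun t := by
    refine ⟨((Finset.univ.image f).sort (· ≤ ·)).flatMap (Tfun f t), ?_, ?_, ?_⟩
    · rw [List.nodup_flatMap]
      constructor
      · intro w _
        by_cases h : w ∈ Finset.univ.image f
        · rw [Tfun, dif_pos h]; exact (t ⟨w, h⟩).2.1
        · rw [Tfun, dif_neg h]; exact List.nodup_nil
      · refine (Finset.sort_nodup _ _).imp ?_
        intro a b hab x hxa hxb
        exact hab ((mem_Tfun hxa).symm.trans (mem_Tfun hxb))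
    · intro x
      have hfx : f x ∈ Finset.univ.image f := Finset.mem_image.mpr ⟨x, Finset.mem_univ x, rfl⟩
      refine List.mem_flatMap.mpr ⟨f x, (Finset.mem_sort _).mpr hfx, ?_⟩
      rw [Tfun, dif_pos hfx]
      exact ((t ⟨f x, hfx⟩).2.2.1 x).mpr rfl
    · rw [List.flatMap_def]
      have hnn : [] ∉ ((Finset.univ.image f).sort (· ≤ ·)).map (Tfun f t) := by
        intro hmem
        obtain ⟨w, hw, hweq⟩ := List.mem_map.mp hmem
        have hw' : w ∈ Finset.univ.image f := (Finset.mem_sort _).mp hw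
        obtain ⟨x, _, hx⟩ := Finset.mem_image.mp hw'
        have : x ∈ Tfun f t w := by
          rw [Tfun, dif_pos hw']
          exact ((t ⟨w, hw'⟩).2.2.1 x).mpr hx
        rw [hweq] at this
        simp at this
      refine (List.isChain_flatten hnn).mpr ⟨?_, ?_⟩
      · intro l hl
        obtain ⟨w, hw, rfl⟩ := List.mem_map.mp hl
        by_cases h : w ∈ Finset.univ.image f
        · refine chain'_imp_of_mem (R := fun a b => ¬ E a b) (fun a b ha hb hnE => ?_) ?_
          · have hfa : f a = w := mem_Tfun ha
            have hfb : f b = w := mem_Tfun hb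
            exact ⟨by omega, fun hEab => absurd hEab hnE⟩
          · rw [Tfun, dif_pos h]; exact (t ⟨w, h⟩).2.2.2
        · rw [Tfun, dif_neg h]; exact List.IsChain.nil
      · rw [List.isChain_map]
        refine List.IsChain.imp ?_ (List.sortedLT_iff_pairwise.mp (Finset.sortedLT_sort _)).isChain
        intro a b hab x hx y hy
        have hfa : f x = a := mem_Tfun (List.mem_of_mem_getLast? hx)
        have hfb : f y = b := mem_Tfun (List.mem_of_mem_head? hy)
        exact ⟨by omega, fun _ => by omega⟩
  left_inv := by
    intro σ
    apply Subtype.ext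
    haveI : IsTrans V (fun a b => f a ≤ f b) := ⟨fun _ _ _ h h' => le_trans h h'⟩
    have hσpair : σ.1.Pairwise (fun a b => f a ≤ f b) :=
      List.isChain_iff_pairwise.mp (σ.2.2.2.imp (fun _ _ h => h.1))
    have hJ : (((Finset.univ.image f).sort (· ≤ ·)).flatMap
        fun w => σ.1.filter fun x => f x = w) = σ.1 :=
      flatMap_filter_eq f _ (List.sortedLT_iff_pairwise.mp (Finset.sortedLT_sort _)) σ.1 hσpair
        (fun x _ => (Finset.mem_sort _).mpr (Finset.mem_image.mpr ⟨x, Finset.mem_univ x, rfl⟩))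
    refine Eq.trans ?_ hJ
    apply flatMap_congr'
    intro w hw
    unfold Tfun
    rw [dif_pos ((Finset.mem_sort _).mp hw)]
  right_inv := by
    intro t
    funext v
    apply Subtype.ext
    show (((Finset.univ.image f).sort (· ≤ ·)).flatMap (Tfun f t)).filter
      (fun x => f x = v.1) = (t v).1
    rw [List.filter_flatMap]
    have hstep : (((Finset.univ.image f).sort (· ≤ ·)).flatMap
        fun w => (Tfun f t w).filter fun x => f x = v.1) =
        (Tfun f t v.1).filter fun x => f x = v.1 := by
      apply flatMap_single _ _ (Finset.sort_nodup _ _) v.1 ((Finset.mem_sort _).mpr v.2)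
      intro w _ hwv
      rw [List.filter_eq_nil_iff]
      intro x hx
      have := mem_Tfun hx
      simp only [decide_eq_true_eq]
      omega
    rw [hstep, Tfun, dif_pos v.2]
    have hv : (⟨v.1, v.2⟩ : {v // v ∈ Finset.univ.image f}) = v := rfl
    rw [hv, List.filter_eq_self]
    intro x hx
    simpa using ((t v).2.2.1 x).mp hx

lemma card_friendlyT (f : V → ℕ) :
    Nat.card (FriendlyT E f) =
      ∏ v ∈ Finset.univ.image f, A E (Finset.univ.filter fun x => f x = v) := by
  rw [Nat.card_congr (friendlyEquiv f), Nat.card_pi,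
    Finset.prod_coe_sort (f := fun v => Nat.card (BlockT E f v))]
  refine Finset.prod_congr rfl (fun v hv => ?_)
  apply Nat.card_congr
  apply Equiv.subtypeEquivRight
  intro l
  simp [Finset.mem_filter]
end Blocks

section Count

variable {V : Type*} [Fintype V] [DecidableEq V] (E : V → V → Prop)

def fiber (f : V → ℕ) (v : ℕ) : Finset V := Finset.univ.filter fun x => f x = v

def Pf (f : V → ℕ) : Finset (Finset V) := (Finset.univ.image f).image (fiber f)

def IsPart (π : Finset (Finset V)) : Prop :=
  (∀ B ∈ π, B.Nonempty) ∧ ∀ x : V, ∃! B : Finset V, B ∈ π ∧ x ∈ B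

lemma isPart_Pf (f : V → ℕ) : IsPart (Pf f) := by
  constructor
  · intro B hB
    obtain ⟨v, hv, rfl⟩ := Finset.mem_image.mp hB
    obtain ⟨x, _, rfl⟩ := Finset.mem_image.mp hv
    exact ⟨x, by simp [fiber]⟩
  · intro x
    refine ⟨fiber f (f x), ⟨Finset.mem_image.mpr
      ⟨f x, Finset.mem_image.mpr ⟨x, Finset.mem_univ x, rfl⟩, rfl⟩, by simp [fiber]⟩, ?_⟩
    rintro B ⟨hB, hxB⟩
    obtain ⟨v, _, rfl⟩ := Finset.mem_image.mp hB
    have hfx : f x = v := by simpa [fiber] using hxB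
    rw [fiber, fiber, hfx]

noncomputable def Psi (π : Finset (Finset V)) : ℕ := ∏ B ∈ π, A E B

lemma L_eq_Psi (f : V → ℕ) : Nat.card (FriendlyT E f) = Psi E (Pf f) := by
  have hinj : ∀ v ∈ Finset.univ.image f, ∀ v' ∈ Finset.univ.image f,
      fiber f v = fiber f v' → v = v' := by
    intro v hv v' _ heq
    obtain ⟨x, _, rfl⟩ := Finset.mem_image.mp hv
    have hx : x ∈ fiber f (f x) := by simp [fiber]
    rw [heq] at hx
    simpa [fiber] using hx
  rw [card_friendlyT, Psi, Pf, Finset.prod_image hinj]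
  rfl

def colorings (m : ℕ) : Finset (V → ℕ) := Fintype.piFinset fun _ => Finset.Icc 1 m

lemma mem_colorings {m : ℕ} {f : V → ℕ} :
    f ∈ colorings (V := V) m ↔ ∀ x, 1 ≤ f x ∧ f x ≤ m := by
  simp [colorings, Fintype.mem_piFinset, Finset.mem_Icc]

def rbEquiv (m : ℕ) :
    {p : (V → ℕ) × List V //
      (∀ x, 1 ≤ p.1 x ∧ p.1 x ≤ m) ∧ p.2.Nodup ∧ (∀ x, x ∈ p.2) ∧ Friendly E p.1 p.2} ≃
    (f : {f : V → ℕ // f ∈ colorings (V := V) m}) × FriendlyT E f.1 where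
  toFun p := ⟨⟨p.1.1, mem_colorings.mpr p.2.1⟩,
    ⟨p.1.2, p.2.2.1, p.2.2.2.1, friendly_iff_chain'.mp p.2.2.2.2⟩⟩
  invFun q := ⟨(q.1.1, q.2.1),
    mem_colorings.mp q.1.2, q.2.2.1, q.2.2.2.1, friendly_iff_chain'.mpr q.2.2.2.2⟩
  left_inv p := rfl
  right_inv q := rfl

lemma card_sigma' {ι : Type*} [Fintype ι] (β : ι → Type*) [∀ i, Finite (β i)] :
    Nat.card ((i : ι) × β i) = ∑ i, Nat.card (β i) := by
  letI : ∀ i, Fintype (β i) := fun i => Fintype.ofFinite (β i)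
  rw [Nat.card_eq_fintype_card, Fintype.card_sigma]
  exact Finset.sum_congr rfl fun i _ => (Nat.card_eq_fintype_card).symm

lemma rbcount_sum (m : ℕ) :
    RBCount V E m = ∑ f ∈ colorings (V := V) m, Nat.card (FriendlyT E f) := by
  rw [RBCount, Nat.card_congr (rbEquiv E m), card_sigma']
  exact Finset.sum_coe_sort (colorings (V := V) m) (fun f => Nat.card (FriendlyT E f))

noncomputable def allParts : Finset (Finset (Finset V)) :=
  @Finset.filter _ IsPart (Classical.decPred _) Finset.univ

lemma mem_allParts {π : Finset (Finset V)} : π ∈ allParts (V := V) ↔ IsPart π := by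
  rw [allParts, @Finset.mem_filter _ _ (Classical.decPred _)]
  exact ⟨fun h => h.2, fun h => ⟨Finset.mem_univ _, h⟩⟩

lemma count_fiber (m : ℕ) (π : Finset (Finset V)) (hπ : IsPart π) :
    ((colorings (V := V) m).filter fun f => Pf f = π).card = m.descFactorial π.card := by
  classical
  obtain ⟨blk, hblk1, hblk2⟩ : ∃ blk : V → Finset V, (∀ x, blk x ∈ π) ∧ ∀ x, x ∈ blk x := by
    choose blk h1 h2 using fun x => (hπ.2 x).exists
    exact ⟨blk, h1, h2⟩
  have hblk_uniq : ∀ (x : V) (B : Finset V), B ∈ π → x ∈ B → B = blk x :=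
    fun x B hB hxB => (hπ.2 x).unique ⟨hB, hxB⟩ ⟨hblk1 x, hblk2 x⟩
  obtain ⟨pick, hpick⟩ : ∃ pick : ↥π → V, ∀ B : ↥π, pick B ∈ (B : Finset V) := by
    choose pick hp using fun B : ↥π => hπ.1 B.1 B.2
    exact ⟨pick, hp⟩
  have hconst : ∀ (f : V → ℕ), Pf f = π → ∀ (B : Finset V), B ∈ π →
      ∀ x ∈ B, ∀ y ∈ B, f x = f y := by
    intro f hf B hB x hx y hy
    rw [← hf] at hB
    obtain ⟨v, _, rfl⟩ := Finset.mem_image.mp hB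
    have hx' : f x = v := by simpa [fiber] using hx
    have hy' : f y = v := by simpa [fiber] using hy
    rw [hx', hy']
  have hfib : ∀ (f : V → ℕ), Pf f = π → ∀ x : V, fiber f (f x) = blk x := by
    intro f hf x
    apply hblk_uniq x
    · rw [← hf]
      exact Finset.mem_image.mpr ⟨f x, Finset.mem_image.mpr ⟨x, Finset.mem_univ x, rfl⟩, rfl⟩
    · simp [fiber]
  have hmain : ((colorings (V := V) m).filter fun f => Pf f = π).card =
      (Finset.univ : Finset (↥π ↪ ↥(Finset.Icc 1 m))).card := by
    refine Finset.card_bij'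
      (i := fun f hf => ⟨fun B => ⟨f (pick B), by
        have hf' := Finset.mem_filter.mp hf
        have h1 := mem_colorings.mp hf'.1 (pick B)
        rw [Finset.mem_Icc]
        exact h1⟩, by
        intro B B' hBB'
        have hf' := Finset.mem_filter.mp hf
        have h1 : f (pick B) = f (pick B') := congrArg Subtype.val hBB'
        have e1 : (B : Finset V) = blk (pick B) :=
          hblk_uniq (pick B) B.1 B.2 (hpick B)
        have e2 : (B' : Finset V) = blk (pick B') :=
          hblk_uniq (pick B') B'.1 B'.2 (hpick B')
        have e3 : blk (pick B) = fiber f (f (pick B)) := (hfib f hf'.2 _).symm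
        have e4 : blk (pick B') = fiber f (f (pick B')) := (hfib f hf'.2 _).symm
        apply Subtype.ext
        rw [e1, e3, h1, ← e4, ← e2]⟩)
      (j := fun e _ => fun x => (e ⟨blk x, hblk1 x⟩ : ℕ))
      (fun _ _ => Finset.mem_univ _)
      ?_ ?_ ?_
    · -- j maps into the filter set
      intro e _
      rw [Finset.mem_filter]
      constructor
      · rw [mem_colorings]
        intro x
        have h2 := (e ⟨blk x, hblk1 x⟩).2
        rw [Finset.mem_Icc] at h2
        exact h2
      · -- Pf (j e) = π
        have hC : ∀ x : V, fiber (fun y => (e ⟨blk y, hblk1 y⟩ : ℕ))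
            ((e ⟨blk x, hblk1 x⟩ : ℕ)) = blk x := by
          intro x
          ext y
          simp only [fiber, Finset.mem_filter, Finset.mem_univ, true_and]
          constructor
          · intro hy
            have h3 : e ⟨blk y, hblk1 y⟩ = e ⟨blk x, hblk1 x⟩ := Subtype.ext hy
            have hbe : blk y = blk x :=
              congrArg Subtype.val (e.injective h3)
            rw [← hbe]
            exact hblk2 y
          · intro hy
            have h3 : blk x = blk y := hblk_uniq y (blk x) (hblk1 x) hy
            have hbe : (⟨blk x, hblk1 x⟩ : ↥π) = ⟨blk y, hblk1 y⟩ := Subtype.ext h3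
            rw [hbe]
        apply Finset.Subset.antisymm
        · intro B hB
          obtain ⟨v, hv, rfl⟩ := Finset.mem_image.mp hB
          obtain ⟨x, _, rfl⟩ := Finset.mem_image.mp hv
          rw [hC x]
          exact hblk1 x
        · intro B hB
          have hx := hpick ⟨B, hB⟩
          have hbx : B = blk (pick ⟨B, hB⟩) :=
            hblk_uniq (pick ⟨B, hB⟩) B hB hx
          rw [hbx, ← hC (pick ⟨B, hB⟩)]
          apply Finset.mem_image.mpr
          exact ⟨(e ⟨blk (pick ⟨B, hB⟩), hblk1 _⟩ : ℕ),
            Finset.mem_image.mpr ⟨pick ⟨B, hB⟩, Finset.mem_univ _, rfl⟩, rfl⟩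
    · -- left inverse
      intro f hf
      have hf' := Finset.mem_filter.mp hf
      funext x
      show f (pick ⟨blk x, hblk1 x⟩) = f x
      exact hconst f hf'.2 (blk x) (hblk1 x) _ (hpick ⟨blk x, hblk1 x⟩) x (hblk2 x)
    · -- right inverse
      intro e _
      apply DFunLike.ext
      intro B
      apply Subtype.ext
      show (e ⟨blk (pick B), hblk1 _⟩ : ℕ) = (e B : ℕ)
      have h4 : B = ⟨blk (pick B), hblk1 _⟩ :=
        Subtype.ext (hblk_uniq (pick B) B.1 B.2 (hpick B))
      rw [← h4]
  rw [hmain, Finset.card_univ, Fintype.card_embedding_eq, Fintype.card_coe, Fintype.card_coe,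
    Nat.card_Icc]
  simp

lemma rbcount_formula (m : ℕ) :
    RBCount V E m = ∑ π ∈ allParts (V := V), m.descFactorial π.card * Psi E π := by
  classical
  rw [rbcount_sum]
  have h1 : ∀ f ∈ colorings (V := V) m, Nat.card (FriendlyT E f) = Psi E (Pf f) :=
    fun f _ => L_eq_Psi E f
  rw [Finset.sum_congr rfl h1]
  have h2 : ∀ f ∈ colorings (V := V) m, Pf f ∈ allParts (V := V) :=
    fun f _ => mem_allParts.mpr (isPart_Pf f)
  rw [← Finset.sum_fiberwise_of_maps_to' h2 (Psi E)]
  refine Finset.sum_congr rfl fun π hπ => ?_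
  rw [Finset.sum_const, smul_eq_mul, count_fiber m π (mem_allParts.mp hπ)]

end Count
end RBAux

/-- There is a polynomial with integer coefficients whose value at every positive
integer `m` is `N_X(m)`: the Redei-Berge polynomial has integer coefficients. -/
theorem RB_polynomial_integer_coeffs {V : Type*} [Fintype V]
    (E : V → V → Prop) (hE : ∀ x, ¬ E x x) :
    ∃ p : Polynomial ℤ, ∀ m : ℕ, 1 ≤ m → p.eval (m : ℤ) = RBCount V E m := by
  classical
  refine ⟨∑ π ∈ RBAux.allParts (V := V),
    Polynomial.C (RBAux.Psi E π : ℤ) * descPochhammer ℤ π.card, ?_⟩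
  intro m _
  rw [RBAux.rbcount_formula E m, Polynomial.eval_finset_sum]
  push_cast
  refine Finset.sum_congr rfl fun π _ => ?_
  rw [Polynomial.eval_mul, Polynomial.eval_C, descPochhammer_eval_eq_descFactorial]
  ring
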